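/- A D-loop Q(·) is isotopic to a group if and only if {φ_{1i} ∘ φ_{1j} : i, j ∈ Q} = Φ₁, where φ_{1k} = φ₁ ∘ φ_k⁻¹ and Φ₁ = {φ_{1j} : j ∈ Q}. -/

import Mathlib

/-- A binary operation `mul` on `Q` is isotopic to a group if there are a group
operation on `Q` and bijections `α, β, γ` of `Q` with `γ(x·y) = α(x)*β(y)`. -/
def IsotopicToGroup {Q : Type*} (mul : Q → Q → Q) : Prop :=
  ∃ (g : Q → Q → Q) (e : Q) (ginv : Q → Q),
    (∀ a b c, g (g a b) c = g a (g b c)) ∧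
    (∀ a, g e a = a) ∧ (∀ a, g a e = a) ∧
    (∀ a, g (ginv a) a = e) ∧
    ∃ α β γ : Q → Q, Function.Bijective α ∧ Function.Bijective β ∧
      Function.Bijective γ ∧ ∀ x y, γ (mul x y) = g (α x) (β y)

/-- Albert-style normalization: a loop isotopic to a group is associative. -/
theorem isotopic_assoc {Q : Type*} (mul : Q → Q → Q) (one : Q)
    (hone_mul : ∀ x, mul one x = x) (hmul_one : ∀ x, mul x one = x)
    (h : IsotopicToGroup mul) :
    ∀ x y z, mul (mul x y) z = mul x (mul y z) := by
  obtain ⟨g, e, ginv, gassoc, gel, ger, ginvl, α, β, γ, hα, hβ, hγ, hiso⟩ := h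
  letI : Group Q :=
    { mul := g, one := e, inv := ginv,
      mul_assoc := gassoc, one_mul := gel, mul_one := ger,
      inv_mul_cancel := ginvl }
  have hiso' : ∀ x y, γ (mul x y) = α x * β y := fun x y => hiso x y
  have hA : ∀ x, α x = γ x * (β one)⁻¹ := by
    intro x
    have hx := hiso' x one
    rw [hmul_one] at hx
    rw [hx]; group
  have hB : ∀ y, β y = (α one)⁻¹ * γ y := by
    intro y
    have hy := hiso' one y
    rw [hone_mul] at hy
    rw [hy]; group
  have hθ : ∀ x y, ((β one)⁻¹ * (α one)⁻¹) * γ (mul x y)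
      = (((β one)⁻¹ * (α one)⁻¹) * γ x) * (((β one)⁻¹ * (α one)⁻¹) * γ y) := by
    intro x y
    rw [hiso' x y, hA x, hB y]
    group
  intro x y z
  apply hγ.injective
  apply mul_left_cancel (a := (β one)⁻¹ * (α one)⁻¹)
  rw [hθ, hθ, hθ, hθ, mul_assoc]

/-- A D-loop `Q(·)` is isotopic to a group iff
`{φ_{1i} ∘ φ_{1j} : i, j ∈ Q} = Φ₁`, where `φ_{1k} = φ₁ ∘ φ_k⁻¹` and
`Φ₁ = {φ_{1j} : j ∈ Q}`. -/
theorem stmt_13 {Q : Type*} (mul : Q → Q → Q) (one : Q)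
    (hone_mul : ∀ x, mul one x = x) (hmul_one : ∀ x, mul x one = x)
    (hL : ∀ a, Function.Bijective (fun x => mul a x))
    (hR : ∀ a, Function.Bijective (fun x => mul x a))
    (rinv : Q → Q) (hrinv : ∀ a, mul a (rinv a) = one)
    (hD : ∀ x y, rinv (mul x y) = mul (rinv y) (rinv x))
    (φ : Q → Equiv.Perm Q) (hφ : ∀ a x, mul x (φ a x) = a) :
    IsotopicToGroup mul ↔
      {f : Equiv.Perm Q | ∃ i j, f = (φ one * (φ i)⁻¹) * (φ one * (φ j)⁻¹)} =
        {f : Equiv.Perm Q | ∃ j, f = φ one * (φ j)⁻¹} := by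
  -- basic loop facts
  have lcan : ∀ a x y, mul a x = mul a y → x = y := fun a x y h => (hL a).injective h
  have rcan : ∀ a x y, mul x a = mul y a → x = y := fun a x y h => (hR a).injective h
  have hφone : ∀ x, φ one x = rinv x := fun x => lcan x _ _ (by rw [hφ, hrinv])
  have hρ1 : rinv one = one := by
    have h1 := hrinv one
    rwa [hone_mul] at h1
  have hρρ : ∀ x, rinv (rinv x) = x := by
    intro x
    apply rcan (rinv x)
    have h1 := hD x (rinv x)
    rw [hrinv, hρ1] at h1
    rw [← h1, hrinv]
  have hlinv : ∀ x, mul (rinv x) x = one := by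
    intro x
    have h1 := hrinv (rinv x)
    rwa [hρρ] at h1
  -- the spin `φ one * (φ j)⁻¹` is characterized by: ρ(x) · (spin x) = ρ(j)
  have hσ : ∀ j x, mul (rinv x) ((φ one * (φ j)⁻¹) x) = rinv j := by
    intro j x
    have hx : mul ((φ j)⁻¹ x) x = j := by
      have h1 := hφ j ((φ j)⁻¹ x)
      rwa [← Equiv.Perm.mul_apply, mul_inv_cancel, Equiv.Perm.one_apply] at h1
    show mul (rinv x) (φ one ((φ j)⁻¹ x)) = rinv j
    rw [hφone, ← hD, hx]
  have hσu : ∀ j x z, mul (rinv x) z = rinv j → (φ one * (φ j)⁻¹) x = z := by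
    intro j x z hz
    exact lcan (rinv x) _ _ ((hσ j x).trans hz.symm)
  constructor
  · -- isotopic to a group ⇒ spins are closed under composition
    intro hiso
    have hassoc := isotopic_assoc mul one hone_mul hmul_one hiso
    apply Set.Subset.antisymm
    · rintro f ⟨i, j, rfl⟩
      refine ⟨mul i j, Equiv.ext fun x => ?_⟩
      have h1 : mul (rinv x) ((φ one * (φ j)⁻¹) x) = rinv j := hσ j x
      have hw : (φ one * (φ i)⁻¹) ((φ one * (φ j)⁻¹) x)
          = mul ((φ one * (φ j)⁻¹) x) (rinv i) := by
        apply lcan (rinv ((φ one * (φ j)⁻¹) x))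
        rw [hσ i, ← hassoc, hlinv, hone_mul]
      have goal1 : mul (rinv x) (mul ((φ one * (φ j)⁻¹) x) (rinv i))
          = rinv (mul i j) := by
        rw [← hassoc, h1, hD i j]
      have h2 := hσu (mul i j) x _ goal1
      calc ((φ one * (φ i)⁻¹) * (φ one * (φ j)⁻¹)) x
          = (φ one * (φ i)⁻¹) ((φ one * (φ j)⁻¹) x) := rfl
        _ = mul ((φ one * (φ j)⁻¹) x) (rinv i) := hw
        _ = (φ one * (φ (mul i j))⁻¹) x := h2.symm
    · rintro f ⟨j, rfl⟩
      exact ⟨j, one, by simp⟩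
  · -- closure of spins ⇒ associativity ⇒ isotopic to a group (to itself)
    intro hset
    have hclosed : ∀ i j, ∃ k,
        (φ one * (φ i)⁻¹) * (φ one * (φ j)⁻¹) = φ one * (φ k)⁻¹ := by
      intro i j
      have hm : ((φ one * (φ i)⁻¹) * (φ one * (φ j)⁻¹))
          ∈ {f : Equiv.Perm Q | ∃ j, f = φ one * (φ j)⁻¹} := by
        rw [← hset]; exact ⟨i, j, rfl⟩
      exact hm
    have key : ∀ x z w,
        mul (rinv (mul (rinv x) z)) (mul (rinv x) w) = mul (rinv z) w := by
      intro x z w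
      obtain ⟨k, hk⟩ := hclosed (rinv (mul (rinv z) w)) (rinv (mul (rinv x) z))
      have hσjx : (φ one * (φ (rinv (mul (rinv x) z)))⁻¹) x = z :=
        hσu _ x z (by rw [hρρ])
      have hσiz : (φ one * (φ (rinv (mul (rinv z) w)))⁻¹) z = w :=
        hσu _ z w (by rw [hρρ])
      have hkx : (φ one * (φ k)⁻¹) x = w := by
        rw [← hk, Equiv.Perm.mul_apply, hσjx, hσiz]
      have hσj1 : (φ one * (φ (rinv (mul (rinv x) z)))⁻¹) one = mul (rinv x) z :=
        hσu _ one _ (by rw [hρ1, hone_mul, hρρ])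
      have hk1 : (φ one * (φ k)⁻¹) one = rinv k :=
        hσu _ one _ (by rw [hρ1, hone_mul])
      have h2 : (φ one * (φ (rinv (mul (rinv z) w)))⁻¹) (mul (rinv x) z) = rinv k := by
        rw [← hσj1, ← Equiv.Perm.mul_apply, hk, hk1]
      have h3 := hσ (rinv (mul (rinv z) w)) (mul (rinv x) z)
      rw [h2, hρρ] at h3
      have h4 : mul (rinv x) w = rinv k := by
        rw [← hkx]; exact hσ k x
      rw [h4, h3]
    have key2 : ∀ u z w,
        mul (mul (rinv z) (rinv u)) (mul u w) = mul (rinv z) w := by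
      intro u z w
      have h1 := key (rinv u) z w
      rwa [hρρ, hD] at h1
    have hLIP : ∀ u w, mul (rinv u) (mul u w) = w := by
      intro u w
      have h1 := key2 u one w
      rwa [hρ1, hone_mul, hone_mul] at h1
    have hassoc : ∀ x y z, mul (mul x y) z = mul x (mul y z) := by
      intro s p t
      have h1 := key2 (rinv p) (rinv s) (mul p t)
      rw [hρρ, hρρ, hLIP] at h1
      exact h1
    exact ⟨mul, one, rinv, hassoc, hone_mul, hmul_one, hlinv, id, id, id,
      Function.bijective_id, Function.bijective_id, Function.bijective_id,
      fun x y => rfl⟩
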